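/- Let α ≠ 0, β, γ be real numbers. Define A₁ := 60, A₂ := 20, A₃ := 90(2β/α² − 1), and B₁ := 420, B₂ := 210, B₃ := 42, B₄ := 315(8β/α² − 5), B₅ := 630(12β/α² − 7), B₆ := 630(2β/α² − 1), B₇ := 210(48γ/α³ − 60β/α² + 23), and C₃ := 1/24, C₅ := 1/1920, C₇ := 1/322560 (so that C₅²/(C₃C₇) = 21/10). Define r := 1680 − 72 B₁ + 180 B₂ − 510 B₃ − 72 B₄ + 27 B₅ + 24 B₆ − 9 B₇ + (C₅²/(C₃ C₇)) ( −2400 + 6 A₁² + 670 A₂ − 30 A₁ A₂ − 4 A₂² − 60 A₃ + 3 A₁ A₃ − A₂ A₃ ). Then r = −(7560/α³)(14 α³ − 27 α β + 12 γ). In particular, r = 0 if and only if 14α³ − 27αβ + 12γ = 0, which holds for the Toda parameters β = (2/3)α², γ = (1/3)α³. -/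
import Mathlib


/-- The obstruction `r` to asymptotic integrability at order `h⁶` of the FPUT
unidirectional-wave normal form equals `−(7560/α³)(14α³ − 27αβ + 12γ)`; in
particular `r = 0` iff `14α³ − 27αβ + 12γ = 0`, which holds for the Toda
parameters `β = (2/3)α²`, `γ = (1/3)α³`. -/
theorem stmt_19 (α β γ : ℝ) (hα : α ≠ 0)
    (A₁ A₂ A₃ B₁ B₂ B₃ B₄ B₅ B₆ B₇ C₃ C₅ C₇ r : ℝ)
    (hA₁ : A₁ = 60) (hA₂ : A₂ = 20) (hA₃ : A₃ = 90 * (2 * β / α ^ 2 - 1))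
    (hB₁ : B₁ = 420) (hB₂ : B₂ = 210) (hB₃ : B₃ = 42)
    (hB₄ : B₄ = 315 * (8 * β / α ^ 2 - 5))
    (hB₅ : B₅ = 630 * (12 * β / α ^ 2 - 7))
    (hB₆ : B₆ = 630 * (2 * β / α ^ 2 - 1))
    (hB₇ : B₇ = 210 * (48 * γ / α ^ 3 - 60 * β / α ^ 2 + 23))
    (hC₃ : C₃ = 1 / 24) (hC₅ : C₅ = 1 / 1920) (hC₇ : C₇ = 1 / 322560)
    (hr : r = 1680 - 72 * B₁ + 180 * B₂ - 510 * B₃ - 72 * B₄ + 27 * B₅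
      + 24 * B₆ - 9 * B₇
      + C₅ ^ 2 / (C₃ * C₇) * (-2400 + 6 * A₁ ^ 2 + 670 * A₂ - 30 * A₁ * A₂
          - 4 * A₂ ^ 2 - 60 * A₃ + 3 * A₁ * A₃ - A₂ * A₃)) :
    C₅ ^ 2 / (C₃ * C₇) = 21 / 10 ∧
    r = -(7560 / α ^ 3) * (14 * α ^ 3 - 27 * α * β + 12 * γ) ∧
    (r = 0 ↔ 14 * α ^ 3 - 27 * α * β + 12 * γ = 0) ∧
    (β = (2 / 3) * α ^ 2 ∧ γ = (1 / 3) * α ^ 3 →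
      14 * α ^ 3 - 27 * α * β + 12 * γ = 0) := by
  have hα3 : α ^ 3 ≠ 0 := pow_ne_zero _ hα
  have hα2 : α ^ 2 ≠ 0 := pow_ne_zero _ hα
  have hC : C₅ ^ 2 / (C₃ * C₇) = 21 / 10 := by subst hC₃ hC₅ hC₇; norm_num
  have hrval : r = -(7560 / α ^ 3) * (14 * α ^ 3 - 27 * α * β + 12 * γ) := by
    subst hA₁ hA₂ hA₃ hB₁ hB₂ hB₃ hB₄ hB₅ hB₆ hB₇ hC₃ hC₅ hC₇ hr
    field_simp
    ring
  refine ⟨hC, hrval, ?_, ?_⟩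
  · rw [hrval]
    constructor
    · intro h
      have := mul_eq_zero.mp h
      rcases this with h1 | h2
      · exfalso
        apply hα3
        have : (7560 : ℝ) / α ^ 3 = 0 := by linarith [neg_eq_zero.mp h1]
        rcases div_eq_zero_iff.mp this with h | h
        · norm_num at h
        · exact h
      · exact h2
    · intro h; rw [h, mul_zero]
  · rintro ⟨hb, hg⟩; rw [hb, hg]; ring
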